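/- arXiv:0908.3414 — 2 statements merged into one kernel-verified Lean document; each statement's English description precedes it below -/
import Mathlib

section
/- Fix r > 0, λ ∈ ℝ, a, b ∈ ℂ, m ∈ ℕ, and complex constants c_k, d_k for k ∈ {−m, …, m}. Define Ψ : ℝ² → ℂ² by Ψ(θ, t) = i·λ·t·(b, a)ᵀ + Σ_{k=−m}^{m} e^{ikθ/r}·(d_k·e^{−kt/r}, c_k·e^{kt/r})ᵀ. Then Ψ satisfies σ₁·(∂Ψ/∂θ) − σ₂·(∂Ψ/∂t) = λ·(a, b)ᵀ at every point (θ, t) ∈ ℝ². -/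
open Complex Matrix

/-- Clifford multiplication `σ₁ = [[0,1],[-1,0]]`. -/
def sigma1 : Matrix (Fin 2) (Fin 2) ℂ := !![0, 1; -1, 0]

/-- Clifford multiplication `σ₂ = [[0,i],[i,0]]`. -/
def sigma2 : Matrix (Fin 2) (Fin 2) ℂ := !![0, I; I, 0]

/-- Partial derivative in the first (θ-)variable of a complex-valued function on `ℝ²`. -/
noncomputable def pdθ (h : ℝ × ℝ → ℂ) (p : ℝ × ℝ) : ℂ :=
  deriv (fun s => h (s, p.2)) p.1

/-- Partial derivative in the second (t-)variable of a complex-valued function on `ℝ²`. -/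
noncomputable def pdt (h : ℝ × ℝ → ℂ) (p : ℝ × ℝ) : ℂ :=
  deriv (fun s => h (p.1, s)) p.2

lemma hasDerivAt_exp_mul (c C : ℂ) (s : ℝ) :
    HasDerivAt (fun s : ℝ => Complex.exp (c * (s:ℂ)) * C)
      (c * (Complex.exp (c * (s:ℂ)) * C)) s := by
  have h1 : HasDerivAt (fun s : ℝ => (s:ℂ)) 1 s := by
    exact Complex.ofRealCLM.hasDerivAt (x := s)
  have := ((h1.const_mul c).cexp).mul_const C
  convert this using 1
  rfl
  ring

lemma keyθ (k r' C : ℂ) (s : ℝ) :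
    HasDerivAt (fun s : ℝ => Complex.exp (I * k * (s:ℂ) / r') * C)
      (I * k / r' * (Complex.exp (I * k * (s:ℂ) / r') * C)) s := by
  have h := hasDerivAt_exp_mul (I * k / r') C s
  have he : ∀ x : ℂ, I * k / r' * x = I * k * x / r' := fun x => by ring
  simp only [he] at h
  convert h using 1
  ring

lemma keyT (A B k r' : ℂ) (s : ℝ) :
    HasDerivAt (fun s : ℝ => A * (B * Complex.exp (k * (s:ℂ) / r')))
      (k / r' * (A * (B * Complex.exp (k * (s:ℂ) / r')))) s := by
  have h1 : HasDerivAt (fun s : ℝ => (s:ℂ)) 1 s := by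
    exact Complex.ofRealCLM.hasDerivAt (x := s)
  have h := (((h1.const_mul (k / r')).cexp).const_mul B).const_mul A
  have he : ∀ x : ℂ, k / r' * x = k * x / r' := fun x => by ring
  simp only [he] at h
  convert h using 1
  rfl
  ring

lemma keyC (u v : ℂ) (s : ℝ) :
    HasDerivAt (fun s : ℝ => u * (s:ℂ) * v) (u * v) s := by
  have h1 : HasDerivAt (fun s : ℝ => (s:ℂ)) 1 s := by
    exact Complex.ofRealCLM.hasDerivAt (x := s)
  have := (h1.const_mul u).mul_const v
  simpa using this

/-- The explicit spinor `Ψ(θ,t) = iλt(b,a)ᵀ + Σ_{k=-m}^m e^{ikθ/r}(d_k e^{-kt/r}, c_k e^{kt/r})ᵀ`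
of Theorem 3 satisfies equation (55): `σ₁·∂Ψ/∂θ − σ₂·∂Ψ/∂t = λ·(a,b)ᵀ` everywhere, where the
partial derivatives of `Ψ = (f,g)` are taken componentwise. -/
theorem stmt_5 (r : ℝ) (hr : 0 < r) (lam : ℝ) (a b : ℂ) (m : ℕ) (c d : ℤ → ℂ)
    (f g : ℝ × ℝ → ℂ)
    (hfdef : f = fun p => I * (lam : ℂ) * (p.2 : ℂ) * b
      + ∑ k ∈ Finset.Icc (-(m : ℤ)) (m : ℤ),
        Complex.exp (I * (k : ℂ) * (p.1 : ℂ) / (r : ℂ)) *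
          (d k * Complex.exp (-(k : ℂ) * (p.2 : ℂ) / (r : ℂ))))
    (hgdef : g = fun p => I * (lam : ℂ) * (p.2 : ℂ) * a
      + ∑ k ∈ Finset.Icc (-(m : ℤ)) (m : ℤ),
        Complex.exp (I * (k : ℂ) * (p.1 : ℂ) / (r : ℂ)) *
          (c k * Complex.exp ((k : ℂ) * (p.2 : ℂ) / (r : ℂ)))) :
    ∀ p : ℝ × ℝ,
      sigma1.mulVec ![pdθ f p, pdθ g p] - sigma2.mulVec ![pdt f p, pdt g p]
        = (lam : ℂ) • ![a, b] := by
  intro p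
  obtain ⟨θ, t⟩ := p
  have hθf : pdθ f (θ, t)
      = ∑ k ∈ Finset.Icc (-(m : ℤ)) (m : ℤ),
          I * (k : ℂ) / (r : ℂ) * (Complex.exp (I * (k : ℂ) * (θ : ℂ) / (r : ℂ)) *
            (d k * Complex.exp (-(k : ℂ) * (t : ℂ) / (r : ℂ)))) := by
    have H : HasDerivAt (fun s : ℝ => I * (lam : ℂ) * (t : ℂ) * b
        + ∑ k ∈ Finset.Icc (-(m : ℤ)) (m : ℤ),
          Complex.exp (I * (k : ℂ) * (s : ℂ) / (r : ℂ)) *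
            (d k * Complex.exp (-(k : ℂ) * (t : ℂ) / (r : ℂ))))
        (∑ k ∈ Finset.Icc (-(m : ℤ)) (m : ℤ),
          I * (k : ℂ) / (r : ℂ) * (Complex.exp (I * (k : ℂ) * (θ : ℂ) / (r : ℂ)) *
            (d k * Complex.exp (-(k : ℂ) * (t : ℂ) / (r : ℂ))))) θ :=
      HasDerivAt.const_add _ (HasDerivAt.fun_sum fun k _ => keyθ (k : ℂ) (r : ℂ) _ θ)
    rw [pdθ, hfdef]
    exact H.deriv
  have hθg : pdθ g (θ, t)
      = ∑ k ∈ Finset.Icc (-(m : ℤ)) (m : ℤ),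
          I * (k : ℂ) / (r : ℂ) * (Complex.exp (I * (k : ℂ) * (θ : ℂ) / (r : ℂ)) *
            (c k * Complex.exp ((k : ℂ) * (t : ℂ) / (r : ℂ)))) := by
    have H : HasDerivAt (fun s : ℝ => I * (lam : ℂ) * (t : ℂ) * a
        + ∑ k ∈ Finset.Icc (-(m : ℤ)) (m : ℤ),
          Complex.exp (I * (k : ℂ) * (s : ℂ) / (r : ℂ)) *
            (c k * Complex.exp ((k : ℂ) * (t : ℂ) / (r : ℂ))))
        (∑ k ∈ Finset.Icc (-(m : ℤ)) (m : ℤ),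
          I * (k : ℂ) / (r : ℂ) * (Complex.exp (I * (k : ℂ) * (θ : ℂ) / (r : ℂ)) *
            (c k * Complex.exp ((k : ℂ) * (t : ℂ) / (r : ℂ))))) θ :=
      HasDerivAt.const_add _ (HasDerivAt.fun_sum fun k _ => keyθ (k : ℂ) (r : ℂ) _ θ)
    rw [pdθ, hgdef]
    exact H.deriv
  have htf : pdt f (θ, t)
      = I * (lam : ℂ) * b + ∑ k ∈ Finset.Icc (-(m : ℤ)) (m : ℤ),
          -(k : ℂ) / (r : ℂ) * (Complex.exp (I * (k : ℂ) * (θ : ℂ) / (r : ℂ)) *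
            (d k * Complex.exp (-(k : ℂ) * (t : ℂ) / (r : ℂ)))) := by
    have H : HasDerivAt (fun s : ℝ => I * (lam : ℂ) * (s : ℂ) * b
        + ∑ k ∈ Finset.Icc (-(m : ℤ)) (m : ℤ),
          Complex.exp (I * (k : ℂ) * (θ : ℂ) / (r : ℂ)) *
            (d k * Complex.exp (-(k : ℂ) * (s : ℂ) / (r : ℂ))))
        (I * (lam : ℂ) * b + ∑ k ∈ Finset.Icc (-(m : ℤ)) (m : ℤ),
          -(k : ℂ) / (r : ℂ) * (Complex.exp (I * (k : ℂ) * (θ : ℂ) / (r : ℂ)) *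
            (d k * Complex.exp (-(k : ℂ) * (t : ℂ) / (r : ℂ))))) t :=
      (keyC (I * (lam : ℂ)) b t).add
        (HasDerivAt.fun_sum fun k _ => keyT _ (d k) (-(k : ℂ)) (r : ℂ) t)
    rw [pdt, hfdef]
    exact H.deriv
  have htg : pdt g (θ, t)
      = I * (lam : ℂ) * a + ∑ k ∈ Finset.Icc (-(m : ℤ)) (m : ℤ),
          (k : ℂ) / (r : ℂ) * (Complex.exp (I * (k : ℂ) * (θ : ℂ) / (r : ℂ)) *
            (c k * Complex.exp ((k : ℂ) * (t : ℂ) / (r : ℂ)))) := by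
    have H : HasDerivAt (fun s : ℝ => I * (lam : ℂ) * (s : ℂ) * a
        + ∑ k ∈ Finset.Icc (-(m : ℤ)) (m : ℤ),
          Complex.exp (I * (k : ℂ) * (θ : ℂ) / (r : ℂ)) *
            (c k * Complex.exp ((k : ℂ) * (s : ℂ) / (r : ℂ))))
        (I * (lam : ℂ) * a + ∑ k ∈ Finset.Icc (-(m : ℤ)) (m : ℤ),
          (k : ℂ) / (r : ℂ) * (Complex.exp (I * (k : ℂ) * (θ : ℂ) / (r : ℂ)) *
            (c k * Complex.exp ((k : ℂ) * (t : ℂ) / (r : ℂ))))) t :=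
      (keyC (I * (lam : ℂ)) a t).add
        (HasDerivAt.fun_sum fun k _ => keyT _ (c k) ((k : ℂ)) (r : ℂ) t)
    rw [pdt, hgdef]
    exact H.deriv
  have hs1 : ∀ x y : ℂ, sigma1.mulVec ![x, y] = ![y, -x] := by
    intro x y; funext i; fin_cases i <;>
      simp [sigma1, Matrix.mulVec, dotProduct, Fin.sum_univ_two]
  have hs2 : ∀ x y : ℂ, sigma2.mulVec ![x, y] = ![I * y, I * x] := by
    intro x y; funext i; fin_cases i <;>
      simp [sigma2, Matrix.mulVec, dotProduct, Fin.sum_univ_two]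
  rw [hs1, hs2]
  have hfac1 : ∑ k ∈ Finset.Icc (-(m : ℤ)) (m : ℤ),
        I * (k : ℂ) / (r : ℂ) * (Complex.exp (I * (k : ℂ) * (θ : ℂ) / (r : ℂ)) *
          (c k * Complex.exp ((k : ℂ) * (t : ℂ) / (r : ℂ))))
      = I * ∑ k ∈ Finset.Icc (-(m : ℤ)) (m : ℤ),
          (k : ℂ) / (r : ℂ) * (Complex.exp (I * (k : ℂ) * (θ : ℂ) / (r : ℂ)) *
            (c k * Complex.exp ((k : ℂ) * (t : ℂ) / (r : ℂ)))) := by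
    rw [Finset.mul_sum]; exact Finset.sum_congr rfl fun k _ => by ring
  have hfac2 : ∑ k ∈ Finset.Icc (-(m : ℤ)) (m : ℤ),
        I * (k : ℂ) / (r : ℂ) * (Complex.exp (I * (k : ℂ) * (θ : ℂ) / (r : ℂ)) *
          (d k * Complex.exp (-(k : ℂ) * (t : ℂ) / (r : ℂ))))
      = (-I) * ∑ k ∈ Finset.Icc (-(m : ℤ)) (m : ℤ),
          -(k : ℂ) / (r : ℂ) * (Complex.exp (I * (k : ℂ) * (θ : ℂ) / (r : ℂ)) *
            (d k * Complex.exp (-(k : ℂ) * (t : ℂ) / (r : ℂ)))) := by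
    rw [Finset.mul_sum]; exact Finset.sum_congr rfl fun k _ => by ring
  funext i
  fin_cases i
  · show pdθ g (θ, t) - I * pdt g (θ, t) = (lam : ℂ) * a
    rw [hθg, htg, hfac1]
    set S := ∑ k ∈ Finset.Icc (-(m : ℤ)) (m : ℤ),
      (k : ℂ) / (r : ℂ) * (Complex.exp (I * (k : ℂ) * (θ : ℂ) / (r : ℂ)) *
        (c k * Complex.exp ((k : ℂ) * (t : ℂ) / (r : ℂ))))
    linear_combination (-(lam : ℂ) * a) * Complex.I_sq
  · show -pdθ f (θ, t) - I * pdt f (θ, t) = (lam : ℂ) * b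
    rw [hθf, htf, hfac2]
    set T := ∑ k ∈ Finset.Icc (-(m : ℤ)) (m : ℤ),
      -(k : ℂ) / (r : ℂ) * (Complex.exp (I * (k : ℂ) * (θ : ℂ) / (r : ℂ)) *
        (d k * Complex.exp (-(k : ℂ) * (t : ℂ) / (r : ℂ))))
    linear_combination (-(lam : ℂ) * b) * Complex.I_sq
end

section
/- Fix r, R > 0, m ∈ ℕ, a, b ∈ ℂ, and complex constants c_k, d_k for k ∈ {−m, …, m} satisfying Re(a·conj(d₀) + conj(b)·c₀) = √(R²+r²)(R²+2r²)/(2rR) and a·conj(d_k) + conj(b)·c_{−k} = 0 for every k ∈ {±1, …, ±m}. Let χ = (a, b)ᵀ and define Ψ : ℝ² → ℂ² by Ψ(θ, t) = i·(√(R²+r²)/(rR))·t·(b, a)ᵀ + Σ_{k=−m}^{m} e^{ikθ/r}·(d_k·e^{−kt/r}, c_k·e^{kt/r})ᵀ. Then Re⟨χ, Ψ(θ, t)⟩ = √(R²+r²)(R²+2r²)/(2rR) for every (θ, t) ∈ ℝ². -/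
open Complex

/-- Verification of condition (ii) of Theorem 7.1 for Theorem 3: under conditions (5) and (6)
on the constants `c_k, d_k`, the real part of `⟨χ, Ψ⟩ = a·conj f + b·conj g` is the constant
`√(R²+r²)(R²+2r²)/(2rR)`, where `Ψ = (f,g)` is the explicit spinor with
`λ = √(R²+r²)/(rR)`. -/
theorem stmt_8 (r R : ℝ) (hr : 0 < r) (hR : 0 < R) (m : ℕ) (a b : ℂ) (c d : ℤ → ℂ)
    (h5 : (a * (starRingEnd ℂ) (d 0) + (starRingEnd ℂ) b * c 0).re
      = Real.sqrt (R ^ 2 + r ^ 2) * (R ^ 2 + 2 * r ^ 2) / (2 * r * R))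
    (h6 : ∀ k : ℤ, k ≠ 0 → |k| ≤ (m : ℤ) →
      a * (starRingEnd ℂ) (d k) + (starRingEnd ℂ) b * c (-k) = 0)
    (f g : ℝ × ℝ → ℂ)
    (hfdef : f = fun p => I * ((Real.sqrt (R ^ 2 + r ^ 2) / (r * R) : ℝ) : ℂ) * (p.2 : ℂ) * b
      + ∑ k ∈ Finset.Icc (-(m : ℤ)) (m : ℤ),
        Complex.exp (I * (k : ℂ) * (p.1 : ℂ) / (r : ℂ)) *
          (d k * Complex.exp (-(k : ℂ) * (p.2 : ℂ) / (r : ℂ))))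
    (hgdef : g = fun p => I * ((Real.sqrt (R ^ 2 + r ^ 2) / (r * R) : ℝ) : ℂ) * (p.2 : ℂ) * a
      + ∑ k ∈ Finset.Icc (-(m : ℤ)) (m : ℤ),
        Complex.exp (I * (k : ℂ) * (p.1 : ℂ) / (r : ℂ)) *
          (c k * Complex.exp ((k : ℂ) * (p.2 : ℂ) / (r : ℂ)))) :
    ∀ p : ℝ × ℝ,
      (a * (starRingEnd ℂ) (f p) + b * (starRingEnd ℂ) (g p)).re
        = Real.sqrt (R ^ 2 + r ^ 2) * (R ^ 2 + 2 * r ^ 2) / (2 * r * R) := by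
  rintro ⟨θ, t⟩
  set S : Finset ℤ := Finset.Icc (-(m : ℤ)) (m : ℤ) with hSdef
  have h0 : (0 : ℤ) ∈ S := by simp [hSdef]
  have hneg : ∀ F : ℤ → ℂ, ∑ k ∈ S, F k = ∑ k ∈ S, F (-k) := by
    intro F
    have himg : S = S.image (fun k => -k) := by
      ext x; simp only [hSdef, Finset.mem_image, Finset.mem_Icc]
      constructor
      · intro hx; exact ⟨-x, by omega, by omega⟩
      · rintro ⟨y, hy, rfl⟩; omega
    conv_lhs => rw [himg]
    rw [Finset.sum_image (by intro x _ y _ h; have h' : -x = -y := h; omega)]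
  set lam : ℂ := ((Real.sqrt (R ^ 2 + r ^ 2) / (r * R) : ℝ) : ℂ) with hlam
  set S1 : ℂ := ∑ k ∈ S, Complex.exp (I * (k : ℂ) * (θ : ℂ) / (r : ℂ)) *
          (d k * Complex.exp (-(k : ℂ) * (t : ℂ) / (r : ℂ))) with hS1
  set S2 : ℂ := ∑ k ∈ S, Complex.exp (I * (k : ℂ) * (θ : ℂ) / (r : ℂ)) *
          (c k * Complex.exp ((k : ℂ) * (t : ℂ) / (r : ℂ))) with hS2
  have hf : f (θ, t) = I * lam * (t : ℂ) * b + S1 := by rw [hfdef]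
  have hg : g (θ, t) = I * lam * (t : ℂ) * a + S2 := by rw [hgdef]
  set X : ℂ := a * (starRingEnd ℂ) (d 0) + (starRingEnd ℂ) b * c 0 with hX
  have hA : a * (starRingEnd ℂ) S1 + (starRingEnd ℂ) b * S2 = X := by
    rw [hS1, hS2, map_sum, Finset.mul_sum, Finset.mul_sum,
      hneg (fun k => (starRingEnd ℂ) b * (Complex.exp (I * (k : ℂ) * (θ : ℂ) / (r : ℂ)) *
          (c k * Complex.exp ((k : ℂ) * (t : ℂ) / (r : ℂ))))),
      ← Finset.sum_add_distrib]
    rw [Finset.sum_eq_single_of_mem 0 h0]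
    · simp [hX]
    · intro k hk hk0
      have hk' : -(m : ℤ) ≤ k ∧ k ≤ (m : ℤ) := by
        simpa only [hSdef, Finset.mem_Icc] using hk
      have hkm : |k| ≤ (m : ℤ) := by rw [abs_le]; omega
      have h6k := h6 k hk0 hkm
      simp only [← Complex.exp_conj, map_mul, map_div₀, Complex.conj_I, map_intCast,
        Complex.conj_ofReal, map_neg]
      push_cast
      simp only [neg_mul, mul_neg, neg_neg, neg_div]
      linear_combination (Complex.exp (-(I * (k : ℂ) * (θ : ℂ) / (r : ℂ))) *
        Complex.exp (-((k : ℂ) * (t : ℂ) / (r : ℂ)))) * h6k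
  set z : ℂ := a * (starRingEnd ℂ) (f (θ, t)) + b * (starRingEnd ℂ) (g (θ, t)) with hz
  have hclam : (starRingEnd ℂ) lam = lam := by rw [hlam]; exact Complex.conj_ofReal _
  have hzz : z + (starRingEnd ℂ) z = X + (starRingEnd ℂ) X := by
    rw [hz, hf, hg, ← hA]
    simp only [map_add, map_mul, map_neg, Complex.conj_conj, Complex.conj_I,
      Complex.conj_ofReal, hclam]
    ring
  rw [Complex.add_conj, Complex.add_conj] at hzz
  have hre : z.re = X.re := by
    have := Complex.ofReal_injective hzz
    have h2 : 2 * z.re = 2 * X.re := by exact_mod_cast this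
    linarith
  exact hre.trans h5
end
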